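/- Let q be an even integer with q ≥ 6 and let G be a C₄-free simple graph on q²+q vertices with maximum degree at most q+1 and at least (1/2)·q·(q+1)² − q edges. If v is a vertex of G of degree q+1, then the sum of the degrees of the neighbors of v is at most q²+2q−1. -/

import Mathlib

/-- A simple graph is `C₄`-free iff no two distinct vertices have two or more
common neighbors. -/
def C4Free {V : Type*} (G : SimpleGraph V) : Prop :=
  ∀ u v : V, u ≠ v → {w : V | G.Adj u w ∧ G.Adj v w}.Subsingleton

/-- Let `q ≥ 6` be even and let `G` be a `C₄`-free graph on `q² + q` vertices
with maximum degree at most `q + 1` and at least `E₀ = q(q+1)²/2 - q` edges.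
If `v` has degree `q + 1`, then the sum of the degrees of the neighbors
of `v` is at most `q² + 2q - 1`. -/
theorem sum_degree_neighbors_le (q : ℕ) (hq : 6 ≤ q) (hqe : Even q)
    (G : SimpleGraph (Fin (q ^ 2 + q))) [DecidableRel G.Adj] (hG : C4Free G)
    (hΔ : ∀ v, G.degree v ≤ q + 1)
    (he : q * (q + 1) ^ 2 / 2 - q ≤ G.edgeFinset.card)
    (v : Fin (q ^ 2 + q)) (hv : G.degree v = q + 1) :
    ∑ w ∈ G.neighborFinset v, G.degree w ≤ q ^ 2 + 2 * q - 1 := by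
  classical
  set N := G.neighborFinset v with hNdef
  have hadjv : ∀ w ∈ N, G.Adj v w := fun w hw => (SimpleGraph.mem_neighborFinset G v w).mp hw
  have hvne : ∀ w ∈ N, w ≠ v := fun w hw => (hadjv w hw).ne'
  have hNcard : N.card = q + 1 := by
    rw [hNdef, G.card_neighborFinset_eq_degree, hv]
  set S : Fin (q ^ 2 + q) → Finset (Fin (q ^ 2 + q)) :=
    fun w => (G.neighborFinset w).erase v with hSdef
  have hdisj : ∀ a ∈ N, ∀ b ∈ N, a ≠ b → Disjoint (S a) (S b) := by
    intro a ha b hb hab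
    rw [Finset.disjoint_left]
    intro u hua hub
    have h1 : u ≠ v := Finset.ne_of_mem_erase hua
    have h2 : G.Adj a u := (SimpleGraph.mem_neighborFinset G a u).mp (Finset.mem_of_mem_erase hua)
    have h3 : G.Adj b u := (SimpleGraph.mem_neighborFinset G b u).mp (Finset.mem_of_mem_erase hub)
    have hsub := hG a b hab
    exact h1 (hsub (Set.mem_setOf.mpr ⟨h2, h3⟩)
      (Set.mem_setOf.mpr ⟨(hadjv a ha).symm, (hadjv b hb).symm⟩))
  have hcardbu : (N.biUnion S).card = ∑ w ∈ N, (S w).card := Finset.card_biUnion hdisj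
  have hsub : N.biUnion S ⊆ Finset.univ.erase v := by
    intro u hu
    obtain ⟨w, hw, hu⟩ := Finset.mem_biUnion.mp hu
    exact Finset.mem_erase.mpr ⟨Finset.ne_of_mem_erase hu, Finset.mem_univ u⟩
  have hucard : (Finset.univ.erase v).card = q ^ 2 + q - 1 := by
    rw [Finset.card_erase_of_mem (Finset.mem_univ v), Finset.card_univ, Fintype.card_fin]
  have hsum_le : ∑ w ∈ N, (S w).card ≤ q ^ 2 + q - 1 := by
    rw [← hcardbu, ← hucard]
    exact Finset.card_le_card hsub
  -- equality is impossible by a parity argument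
  have hne_eq : ∑ w ∈ N, (S w).card ≠ q ^ 2 + q - 1 := by
    intro heq
    have hbu : N.biUnion S = Finset.univ.erase v := by
      apply Finset.eq_of_subset_of_card_le hsub
      rw [hucard, hcardbu, heq]
    -- every vertex of N has exactly one neighbor inside N
    have hone : ∀ w ∈ N, ∃! w', w' ∈ N ∧ G.Adj w w' := by
      intro w hw
      have hwmem : w ∈ N.biUnion S := by
        rw [hbu]
        exact Finset.mem_erase.mpr ⟨hvne w hw, Finset.mem_univ w⟩
      obtain ⟨w', hw', hwS⟩ := Finset.mem_biUnion.mp hwmem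
      have hadj : G.Adj w w' :=
        ((SimpleGraph.mem_neighborFinset G w' w).mp (Finset.mem_of_mem_erase hwS)).symm
      refine ⟨w', ⟨hw', hadj⟩, ?_⟩
      rintro y ⟨hy, hyadj⟩
      have hsub2 := hG v w (hvne w hw).symm
      exact hsub2 (Set.mem_setOf.mpr ⟨hadjv y hy, hyadj⟩)
        (Set.mem_setOf.mpr ⟨hadjv w' hw', hadj⟩)
    -- the induced graph on N
    let H : SimpleGraph (Fin (q ^ 2 + q)) :=
      { Adj := fun x y => x ∈ N ∧ y ∈ N ∧ G.Adj x y
        symm := ⟨fun x y ⟨hx, hy, hxy⟩ => ⟨hy, hx, hxy.symm⟩⟩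
        loopless := ⟨fun x ⟨_, _, h⟩ => G.irrefl h⟩ }
    haveI : DecidableRel H.Adj := fun x y => instDecidableAnd
    have hHdeg : ∀ w, H.degree w = if w ∈ N then 1 else 0 := by
      intro w
      rw [← SimpleGraph.card_neighborFinset_eq_degree]
      by_cases hw : w ∈ N
      · obtain ⟨w', ⟨hw'N, hw'adj⟩, huniq⟩ := hone w hw
        have : H.neighborFinset w = {w'} := by
          ext x
          simp only [SimpleGraph.mem_neighborFinset, Finset.mem_singleton]
          constructor
          · rintro ⟨_, hxN, hadj⟩
            exact huniq x ⟨hxN, hadj⟩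
          · rintro rfl
            exact ⟨hw, hw'N, hw'adj⟩
        rw [this, if_pos hw, Finset.card_singleton]
      · have : H.neighborFinset w = ∅ := by
          ext x
          simp only [SimpleGraph.mem_neighborFinset, Finset.notMem_empty, iff_false]
          rintro ⟨hwN, _, _⟩
          exact hw hwN
        rw [this, if_neg hw, Finset.card_empty]
    have hsumdeg : ∑ x, H.degree x = q + 1 := by
      calc ∑ x, H.degree x = ∑ x, if x ∈ N then 1 else 0 := by
            exact Finset.sum_congr rfl fun x _ => hHdeg x
        _ = N.card := by
            rw [Finset.sum_ite_mem, Finset.univ_inter, Finset.sum_const, smul_eq_mul, mul_one]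
        _ = q + 1 := hNcard
    have heven := SimpleGraph.sum_degrees_eq_twice_card_edges H
    rw [hsumdeg] at heven
    obtain ⟨m, hm⟩ := hqe
    omega
  have hdeg : ∀ w ∈ N, (S w).card = G.degree w - 1 := by
    intro w hw
    rw [hSdef]
    rw [Finset.card_erase_of_mem
      ((SimpleGraph.mem_neighborFinset G w v).mpr (hadjv w hw).symm),
      G.card_neighborFinset_eq_degree]
  have hdegpos : ∀ w ∈ N, 1 ≤ G.degree w := by
    intro w hw
    rw [← G.card_neighborFinset_eq_degree]
    exact Finset.card_pos.mpr ⟨v, (SimpleGraph.mem_neighborFinset G w v).mpr (hadjv w hw).symm⟩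
  have hkey : ∑ w ∈ N, G.degree w = (∑ w ∈ N, (S w).card) + N.card := by
    calc ∑ w ∈ N, G.degree w = ∑ w ∈ N, ((S w).card + 1) := by
          apply Finset.sum_congr rfl
          intro w hw
          have h1 := hdeg w hw
          have h2 := hdegpos w hw
          omega
      _ = (∑ w ∈ N, (S w).card) + N.card := by
          rw [Finset.sum_add_distrib, Finset.sum_const, smul_eq_mul, mul_one]
  have h2 : ∑ w ∈ N, (S w).card ≤ q ^ 2 + q - 2 := by omega
  rw [hkey, hNcard]
  have : 2 ≤ q ^ 2 + q := by nlinarith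
  omega
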